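/- Let a ∈ ℝⁿ have i.i.d. standard Gaussian entries, x ∈ ℝⁿ fixed, j an index, and Z := (aᵀx)² a_j². Define Z̃ := ‖x‖₂² + 2x_j² − Z. Then E[Z̃] = 0, Z̃ ≤ 3‖x‖₂² almost surely, and E[Z̃²] = 8‖x‖₂⁴ + 68x_j²‖x‖₂² + 20x_j⁴ ≤ 96‖x‖₂⁴. -/

import Mathlib

open MeasureTheory ProbabilityTheory Real Filter
open scoped NNReal ENNReal

namespace Stmt2Aux

noncomputable section


def gm (p : ℕ) : ℝ := ∫ x : ℝ, x ^ p * Real.exp (-(1/2 : ℝ) * x ^ 2)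

lemma integrable_pow_exp (p : ℕ) :
    Integrable (fun x : ℝ => x ^ p * Real.exp (-(1/2 : ℝ) * x ^ 2)) := by
  have h := integrable_rpow_mul_exp_neg_mul_sq (b := 1/2) (by norm_num)
    (s := (p : ℝ)) (by linarith [Nat.cast_nonneg (α := ℝ) p])
  simpa [Real.rpow_natCast] using h

lemma gm_zero : gm 0 = Real.sqrt (2 * π) := by
  have h := integral_gaussian (1/2 : ℝ)
  simp only [gm, pow_zero, one_mul]
  rw [h]
  norm_num [mul_comm]

lemma gm_odd (p : ℕ) (hp : Odd p) : gm p = 0 := by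
  have h := integral_neg_eq_self
    (fun x : ℝ => x ^ p * Real.exp (-(1/2 : ℝ) * x ^ 2)) volume
  have h2 : ∀ x : ℝ, (-x) ^ p * Real.exp (-(1/2 : ℝ) * (-x) ^ 2)
      = -(x ^ p * Real.exp (-(1/2 : ℝ) * x ^ 2)) := by
    intro x
    rw [hp.neg_pow, neg_sq]
    ring
  simp only [h2, integral_neg] at h
  have : -gm p = gm p := h
  linarith

lemma gm_rec (p : ℕ) : gm (p + 2) = ((p : ℝ) + 1) * gm p := by
  have hu : ∀ x : ℝ, HasDerivAt (fun y : ℝ => y ^ (p+1)) (((p:ℝ)+1) * x ^ p) x := by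
    intro x
    have := hasDerivAt_pow (p+1) x
    norm_num at this
    exact this
  have hv : ∀ x : ℝ, HasDerivAt (fun y : ℝ => -Real.exp (-(1/2 : ℝ) * y ^ 2))
      (x * Real.exp (-(1/2 : ℝ) * x ^ 2)) x := by
    intro x
    have h1 : HasDerivAt (fun y : ℝ => -(1/2 : ℝ) * y ^ 2) (-(1/2:ℝ) * (2 * x ^ 1)) x :=
      (hasDerivAt_pow 2 x).const_mul (-(1/2 : ℝ))
    have h2 : HasDerivAt (fun y : ℝ => -Real.exp (-(1/2 : ℝ) * y ^ 2)) _ x := (h1.exp).neg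
    convert h2 using 1
    ring
  have huv' : Integrable ((fun y : ℝ => y ^ (p+1)) * (fun x : ℝ => x * Real.exp (-(1/2 : ℝ) * x ^ 2))) := by
    apply (integrable_pow_exp (p+2)).congr
    filter_upwards with x
    simp only [Pi.mul_apply]
    ring
  have hu'v : Integrable ((fun x : ℝ => ((p:ℝ)+1) * x ^ p) * (fun y : ℝ => -Real.exp (-(1/2 : ℝ) * y ^ 2))) := by
    apply (((integrable_pow_exp p).const_mul (((p:ℝ)+1))).neg).congr
    filter_upwards with x
    simp only [Pi.mul_apply, Pi.neg_apply]
    ring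
  have huv : Integrable ((fun y : ℝ => y ^ (p+1)) * (fun y : ℝ => -Real.exp (-(1/2 : ℝ) * y ^ 2))) := by
    apply ((integrable_pow_exp (p+1)).neg).congr
    filter_upwards with x
    simp only [Pi.mul_apply, Pi.neg_apply]
    ring
  have H := integral_mul_deriv_eq_deriv_mul_of_integrable (fun x _ => hu x) (fun x _ => hv x) huv' hu'v huv
  have e1 : ∫ x : ℝ, x ^ (p+1) * (x * Real.exp (-(1/2 : ℝ) * x ^ 2)) = gm (p+2) := by
    rw [gm]
    congr 1
    funext x
    ring
  have e2 : ∫ x : ℝ, ((p:ℝ)+1) * x ^ p * (-Real.exp (-(1/2 : ℝ) * x ^ 2))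
      = -(((p:ℝ)+1) * gm p) := by
    rw [gm, ← integral_const_mul, ← integral_neg]
    congr 1
    funext x
    ring
  rw [e1, e2] at H
  linarith

lemma gaussianPDFReal_zero_one (x : ℝ) :
    gaussianPDFReal 0 1 x = (Real.sqrt (2 * π))⁻¹ * Real.exp (-(1/2 : ℝ) * x ^ 2) := by
  rw [gaussianPDFReal]
  norm_num
  left
  ring_nf

lemma integral_gaussianReal_eq (f : ℝ → ℝ) :
    ∫ x, f x ∂(gaussianReal 0 1) = ∫ x, gaussianPDFReal 0 1 x * f x := by
  rw [gaussianReal_of_var_ne_zero 0 one_ne_zero, gaussianPDF_def]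
  rw [show (fun x => ENNReal.ofReal (gaussianPDFReal 0 1 x))
      = fun x => ((Real.toNNReal (gaussianPDFReal 0 1 x) : ℝ≥0) : ℝ≥0∞) from rfl]
  rw [integral_withDensity_eq_integral_smul (measurable_gaussianPDFReal 0 1).real_toNNReal f]
  congr 1
  funext x
  rw [NNReal.smul_def, Real.coe_toNNReal _ (gaussianPDFReal_nonneg 0 1 x), smul_eq_mul]

lemma integrable_pow_gaussianReal (p : ℕ) :
    Integrable (fun x : ℝ => x ^ p) (gaussianReal 0 1) := by
  rw [gaussianReal_of_var_ne_zero 0 one_ne_zero, gaussianPDF_def]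
  rw [show (fun x => ENNReal.ofReal (gaussianPDFReal 0 1 x))
      = fun x => ((Real.toNNReal (gaussianPDFReal 0 1 x) : ℝ≥0) : ℝ≥0∞) from rfl]
  rw [integrable_withDensity_iff_integrable_smul (measurable_gaussianPDFReal 0 1).real_toNNReal]
  have : Integrable (fun x : ℝ => (Real.sqrt (2 * π))⁻¹ * (x ^ p * Real.exp (-(1/2 : ℝ) * x ^ 2))) :=
    (integrable_pow_exp p).const_mul _
  apply this.congr
  filter_upwards with x
  rw [NNReal.smul_def, Real.coe_toNNReal _ (gaussianPDFReal_nonneg 0 1 x), smul_eq_mul,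
    gaussianPDFReal_zero_one]
  ring

/-- moments of the standard gaussian -/
def M (p : ℕ) : ℝ := ∫ x, x ^ p ∂(gaussianReal 0 1)

lemma M_eq (p : ℕ) : M p = (Real.sqrt (2 * π))⁻¹ * gm p := by
  rw [M, integral_gaussianReal_eq, gm, ← integral_const_mul]
  congr 1
  funext x
  rw [gaussianPDFReal_zero_one]
  ring

lemma sqrt_two_pi_pos : (0:ℝ) < Real.sqrt (2 * π) :=
  Real.sqrt_pos.2 (by positivity)

lemma M_zero : M 0 = 1 := by
  rw [M_eq, gm_zero, inv_mul_cancel₀ (ne_of_gt sqrt_two_pi_pos)]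

lemma M_odd (p : ℕ) (hp : Odd p) : M p = 0 := by
  rw [M_eq, gm_odd p hp, mul_zero]

lemma M_rec (p : ℕ) : M (p + 2) = ((p:ℝ) + 1) * M p := by
  rw [M_eq, M_eq, gm_rec]
  ring

lemma M_two : M 2 = 1 := by rw [show 2 = 0 + 2 from rfl, M_rec, M_zero]; norm_num
lemma M_four : M 4 = 3 := by rw [show 4 = 2 + 2 from rfl, M_rec, M_two]; norm_num
lemma M_six : M 6 = 15 := by rw [show 6 = 4 + 2 from rfl, M_rec, M_four]; norm_num
lemma M_eight : M 8 = 105 := by rw [show 8 = 6 + 2 from rfl, M_rec, M_six]; norm_num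
lemma M_one : M 1 = 0 := M_odd 1 (by decide)
lemma M_three : M 3 = 0 := M_odd 3 (by decide)
lemma M_five : M 5 = 0 := M_odd 5 (by decide)
lemma M_seven : M 7 = 0 := M_odd 7 (by decide)


lemma M_def (p : ℕ) : M p = ∫ x, x ^ p ∂(gaussianReal 0 1) := rfl

abbrev gs : Measure ℝ := gaussianReal 0 1
abbrev piG (m : ℕ) : Measure (Fin m → ℝ) := Measure.pi fun _ => gs

lemma expand_pt (A B t : ℝ) (q w : ℕ) :
    (A * t + B) ^ q * A ^ w
      = ∑ r ∈ Finset.range (q+1), ((q.choose r : ℝ) * t ^ r) * (A ^ (r+w) * B ^ (q-r)) := by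
  rw [add_pow, Finset.sum_mul]
  apply Finset.sum_congr rfl
  intro r _
  rw [mul_pow, pow_add]
  ring

lemma binom_integrable (m : ℕ) (t : ℝ) (y : Fin m → ℝ)
    (hs : ∀ q : ℕ, Integrable (fun c => (∑ i, c i * y i) ^ q) (piG m)) (q w : ℕ) :
    Integrable (fun z : ℝ × (Fin m → ℝ) => (z.1 * t + ∑ i, z.2 i * y i) ^ q * z.1 ^ w)
      (gs.prod (piG m)) := by
  rw [show (fun z : ℝ × (Fin m → ℝ) => (z.1 * t + ∑ i, z.2 i * y i) ^ q * z.1 ^ w)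
      = fun z : ℝ × (Fin m → ℝ) => ∑ r ∈ Finset.range (q+1),
        ((q.choose r : ℝ) * t ^ r) * (z.1 ^ (r+w) * (∑ i, z.2 i * y i) ^ (q-r)) from
    funext fun z => expand_pt z.1 _ t q w]
  exact integrable_finset_sum _ fun r _ =>
    ((integrable_pow_gaussianReal (r+w)).mul_prod (hs (q-r))).const_mul _

lemma binom_int (m : ℕ) (t : ℝ) (y : Fin m → ℝ)
    (hs : ∀ q : ℕ, Integrable (fun c => (∑ i, c i * y i) ^ q) (piG m)) (q w : ℕ) :
    ∫ z : ℝ × (Fin m → ℝ), (z.1 * t + ∑ i, z.2 i * y i) ^ q * z.1 ^ w ∂(gs.prod (piG m))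
      = ∑ r ∈ Finset.range (q+1), (q.choose r : ℝ) * t ^ r * M (r+w)
          * ∫ c, (∑ i, c i * y i) ^ (q-r) ∂(piG m) := by
  rw [show (fun z : ℝ × (Fin m → ℝ) => (z.1 * t + ∑ i, z.2 i * y i) ^ q * z.1 ^ w)
      = fun z : ℝ × (Fin m → ℝ) => ∑ r ∈ Finset.range (q+1),
        ((q.choose r : ℝ) * t ^ r) * (z.1 ^ (r+w) * (∑ i, z.2 i * y i) ^ (q-r)) from
    funext fun z => expand_pt z.1 _ t q w]
  rw [integral_finset_sum _ fun r _ =>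
    ((integrable_pow_gaussianReal (r+w)).mul_prod (hs (q-r))).const_mul _]
  apply Finset.sum_congr rfl
  intro r _
  rw [integral_const_mul,
    show (∫ a : ℝ × (Fin m → ℝ), a.1 ^ (r+w) * (∑ i, a.2 i * y i) ^ (q-r) ∂(gs.prod (piG m)))
      = (∫ b : ℝ, b ^ (r+w) ∂gs) * ∫ c, (∑ i, c i * y i) ^ (q-r) ∂(piG m) from
      integral_prod_mul (f := fun b : ℝ => b ^ (r+w)) (g := fun c : Fin m → ℝ => (∑ i, c i * y i) ^ (q-r)), ← M_def]
  ring

lemma integral_split {m : ℕ} (j : Fin (m+1)) (F : ℝ × (Fin m → ℝ) → ℝ) :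
    ∫ a, F (a j, fun i => a (j.succAbove i)) ∂(piG (m+1))
      = ∫ p, F p ∂(gs.prod (piG m)) := by
  rw [← (measurePreserving_piFinSuccAbove (fun _ : Fin (m+1) => gs) j).integral_comp
    (MeasurableEquiv.measurableEmbedding _) F]
  rfl

lemma integrable_split {m : ℕ} (j : Fin (m+1)) (F : ℝ × (Fin m → ℝ) → ℝ) :
    Integrable (fun a => F (a j, fun i => a (j.succAbove i))) (piG (m+1))
      ↔ Integrable F (gs.prod (piG m)) := by
  rw [← (measurePreserving_piFinSuccAbove (fun _ : Fin (m+1) => gs) j).integrable_comp_emb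
    (MeasurableEquiv.measurableEmbedding _)]
  rfl

lemma smoments (m : ℕ) (y : Fin m → ℝ) :
    (∀ q : ℕ, Integrable (fun c => (∑ i, c i * y i) ^ q) (piG m)) ∧
    (∫ c, (∑ i, c i * y i) ^ 2 ∂(piG m) = ∑ i, y i ^ 2) ∧
    (∫ c, (∑ i, c i * y i) ^ 3 ∂(piG m) = 0) ∧
    (∫ c, (∑ i, c i * y i) ^ 4 ∂(piG m) = 3 * (∑ i, y i ^ 2) ^ 2) ∧
    (∫ c, (∑ i, c i * y i) ∂(piG m) = 0) := by
  induction m with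
  | zero =>
      refine ⟨fun q => ?_, by simp, by simp, by simp, by simp⟩
      simpa using integrable_const ((0:ℝ) ^ q)
  | succ m IH =>
      set y' : Fin m → ℝ := fun i => y i.succ with hy'
      obtain ⟨hInt, hN2, hN3, hN4, hN1⟩ := IH y'
      have hN0 : ∫ c, (∑ i, c i * y' i) ^ 0 ∂(piG m) = 1 := by simp
      have hpt : ∀ (q : ℕ) (a : Fin (m+1) → ℝ),
          (∑ i, a i * y i) ^ q
            = (fun z : ℝ × (Fin m → ℝ) => (z.1 * y 0 + ∑ i, z.2 i * y' i) ^ q * z.1 ^ 0)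
              (a 0, fun i => a ((0 : Fin (m+1)).succAbove i)) := by
        intro q a
        simp only [pow_zero, mul_one]
        congr 1
        rw [Fin.sum_univ_succAbove (fun i => a i * y i) 0]
        simp [hy', Fin.zero_succAbove]
      have hS : ∑ i, y i ^ 2 = y 0 ^ 2 + ∑ i, y' i ^ 2 := by
        rw [Fin.sum_univ_succ (f := fun i => y i ^ 2)]
      have hkey : ∀ q : ℕ, ∫ c, (∑ i, c i * y i) ^ q ∂(piG (m+1))
          = ∑ r ∈ Finset.range (q+1), (q.choose r : ℝ) * (y 0) ^ r * M (r+0)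
              * ∫ c, (∑ i, c i * y' i) ^ (q-r) ∂(piG m) := by
        intro q
        have e1 := integral_split (m := m) 0
          (fun z : ℝ × (Fin m → ℝ) => (z.1 * y 0 + ∑ i, z.2 i * y' i) ^ q * z.1 ^ 0)
        have e2 : ∫ c, (∑ i, c i * y i) ^ q ∂(piG (m+1))
            = ∫ a, (fun z : ℝ × (Fin m → ℝ) => (z.1 * y 0 + ∑ i, z.2 i * y' i) ^ q * z.1 ^ 0)
                (a 0, fun i => a ((0 : Fin (m+1)).succAbove i)) ∂(piG (m+1)) := by
          congr 1
          funext a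
          exact hpt q a
        rw [e2, e1]
        exact binom_int m (y 0) y' hInt q 0
      have hIq : ∀ q : ℕ, Integrable (fun c => (∑ i, c i * y i) ^ q) (piG (m+1)) := by
        intro q
        have h0 : Integrable (fun a : Fin (m+1) → ℝ =>
            (fun z : ℝ × (Fin m → ℝ) => (z.1 * y 0 + ∑ i, z.2 i * y' i) ^ q * z.1 ^ 0)
              (a 0, fun i => a ((0 : Fin (m+1)).succAbove i))) (piG (m+1)) :=
          (integrable_split 0 _).2 (binom_integrable m (y 0) y' hInt q 0)
        exact h0.congr (Filter.Eventually.of_forall fun a => (hpt q a).symm)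
      refine ⟨hIq, ?_, ?_, ?_, ?_⟩
      · rw [hkey 2]
        simp only [Finset.sum_range_succ, Finset.sum_range_zero]
        norm_num [hN0, hN1, hN2, M_zero, M_one, M_two, pow_one]
        rw [hS]; ring
      · rw [hkey 3]
        simp only [Finset.sum_range_succ, Finset.sum_range_zero]
        norm_num [hN0, hN1, hN2, hN3, M_zero, M_one, M_two, M_three, pow_one]
      · rw [hkey 4]
        simp only [Finset.sum_range_succ, Finset.sum_range_zero]
        norm_num [hN0, hN1, hN2, hN3, hN4, M_zero, M_one, M_two, M_three, M_four, pow_one,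
          show Nat.choose 4 2 = 6 from rfl]
        rw [hS]; ring
      · have := hkey 1
        simp only [pow_one] at this
        rw [this]
        simp only [Finset.sum_range_succ, Finset.sum_range_zero]
        norm_num [hN0, hN1, M_zero, M_one, pow_one]

end

end Stmt2Aux

open Stmt2Aux in
theorem stmt_2 {n : ℕ} (x : Fin n → ℝ) (j : Fin n)
    (μ : Measure (Fin n → ℝ))
    (hμ : μ = Measure.pi fun _ => gaussianReal 0 1) :
    (∫ a, ((∑ i, (x i) ^ 2) + 2 * (x j) ^ 2 - (∑ i, a i * x i) ^ 2 * (a j) ^ 2) ∂μ = 0)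
    ∧ (∀ᵐ a ∂μ,
        (∑ i, (x i) ^ 2) + 2 * (x j) ^ 2 - (∑ i, a i * x i) ^ 2 * (a j) ^ 2
          ≤ 3 * (∑ i, (x i) ^ 2))
    ∧ (∫ a, ((∑ i, (x i) ^ 2) + 2 * (x j) ^ 2 - (∑ i, a i * x i) ^ 2 * (a j) ^ 2) ^ 2 ∂μ
        = 8 * (∑ i, (x i) ^ 2) ^ 2 + 68 * (x j) ^ 2 * (∑ i, (x i) ^ 2) + 20 * (x j) ^ 4)
    ∧ (8 * (∑ i, (x i) ^ 2) ^ 2 + 68 * (x j) ^ 2 * (∑ i, (x i) ^ 2) + 20 * (x j) ^ 4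
        ≤ 96 * (∑ i, (x i) ^ 2) ^ 2) := by
  subst hμ
  -- easy facts
  have hxj : x j ^ 2 ≤ ∑ i, x i ^ 2 :=
    Finset.single_le_sum (f := fun i => x i ^ 2) (fun i _ => sq_nonneg _) (Finset.mem_univ j)
  have hSnn : (0:ℝ) ≤ ∑ i, x i ^ 2 := Finset.sum_nonneg fun i _ => sq_nonneg _
  have part2 : ∀ᵐ a ∂(Measure.pi fun _ : Fin n => gaussianReal 0 1),
      (∑ i, (x i) ^ 2) + 2 * (x j) ^ 2 - (∑ i, a i * x i) ^ 2 * (a j) ^ 2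
        ≤ 3 * (∑ i, (x i) ^ 2) := by
    filter_upwards with a
    nlinarith [sq_nonneg ((∑ i, a i * x i) * a j), sq_nonneg (a j), sq_nonneg (∑ i, a i * x i),
      mul_nonneg (sq_nonneg (∑ i, a i * x i)) (sq_nonneg (a j))]
  have part4 : 8 * (∑ i, (x i) ^ 2) ^ 2 + 68 * (x j) ^ 2 * (∑ i, (x i) ^ 2) + 20 * (x j) ^ 4
      ≤ 96 * (∑ i, (x i) ^ 2) ^ 2 := by
    nlinarith [sq_nonneg (x j), mul_le_mul_of_nonneg_left hxj (sq_nonneg (x j)),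
      mul_le_mul_of_nonneg_right hxj hSnn]
  obtain ⟨m, rfl⟩ : ∃ m, n = m + 1 := by
    cases n with
    | zero => exact absurd j.2 (by simp)
    | succ m => exact ⟨m, rfl⟩
  set t : ℝ := x j with ht
  set y' : Fin m → ℝ := fun i => x (j.succAbove i) with hy'
  obtain ⟨hInt, hN2, hN3, hN4, hN1⟩ := smoments m y'
  have hN0 : ∫ c, (∑ i, c i * y' i) ^ 0 ∂(piG m) = 1 := by simp
  set V : ℝ := ∑ i, y' i ^ 2 with hV
  have hS : ∑ i, x i ^ 2 = t ^ 2 + V := by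
    rw [Fin.sum_univ_succAbove (fun i => x i ^ 2) j]
  -- pointwise splittings
  have hpt : ∀ (q w : ℕ) (a : Fin (m+1) → ℝ),
      (∑ i, a i * x i) ^ q * (a j) ^ w
        = (fun z : ℝ × (Fin m → ℝ) => (z.1 * t + ∑ i, z.2 i * y' i) ^ q * z.1 ^ w)
          (a j, fun i => a (j.succAbove i)) := by
    intro q w a
    simp only
    congr 2
    rw [Fin.sum_univ_succAbove (fun i => a i * x i) j]
  -- integral values
  have hIZ : ∫ a, (∑ i, a i * x i) ^ 2 * (a j) ^ 2 ∂(piG (m+1)) = V + 3 * t ^ 2 := by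
    have e1 := integral_split (m := m) j
      (fun z : ℝ × (Fin m → ℝ) => (z.1 * t + ∑ i, z.2 i * y' i) ^ 2 * z.1 ^ 2)
    have e2 : ∫ a, (∑ i, a i * x i) ^ 2 * (a j) ^ 2 ∂(piG (m+1))
        = ∫ a, (fun z : ℝ × (Fin m → ℝ) => (z.1 * t + ∑ i, z.2 i * y' i) ^ 2 * z.1 ^ 2)
            (a j, fun i => a (j.succAbove i)) ∂(piG (m+1)) := by
      congr 1
      funext a
      exact hpt 2 2 a
    rw [e2, e1, binom_int m t y' hInt 2 2]
    simp only [Finset.sum_range_succ, Finset.sum_range_zero]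
    norm_num [hN0, hN1, hN2, M_two, M_three, M_four, pow_one, hV]
    ring
  have hIZ4 : ∫ a, (∑ i, a i * x i) ^ 4 * (a j) ^ 4 ∂(piG (m+1))
      = 9 * V ^ 2 + 90 * t ^ 2 * V + 105 * t ^ 4 := by
    have e1 := integral_split (m := m) j
      (fun z : ℝ × (Fin m → ℝ) => (z.1 * t + ∑ i, z.2 i * y' i) ^ 4 * z.1 ^ 4)
    have e2 : ∫ a, (∑ i, a i * x i) ^ 4 * (a j) ^ 4 ∂(piG (m+1))
        = ∫ a, (fun z : ℝ × (Fin m → ℝ) => (z.1 * t + ∑ i, z.2 i * y' i) ^ 4 * z.1 ^ 4)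
            (a j, fun i => a (j.succAbove i)) ∂(piG (m+1)) := by
      congr 1
      funext a
      exact hpt 4 4 a
    rw [e2, e1, binom_int m t y' hInt 4 4]
    simp only [Finset.sum_range_succ, Finset.sum_range_zero]
    norm_num [hN0, hN1, hN2, hN3, hN4, M_four, M_five, M_six, M_seven, M_eight, pow_one, hV,
      show Nat.choose 4 2 = 6 from rfl]
    ring
  -- integrability
  have hZint : ∀ q w : ℕ, Integrable (fun a => (∑ i, a i * x i) ^ q * (a j) ^ w) (piG (m+1)) := by
    intro q w
    have h0 : Integrable (fun a : Fin (m+1) → ℝ =>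
        (fun z : ℝ × (Fin m → ℝ) => (z.1 * t + ∑ i, z.2 i * y' i) ^ q * z.1 ^ w)
          (a j, fun i => a (j.succAbove i))) (piG (m+1)) :=
      (integrable_split j _).2 (binom_integrable m t y' hInt q w)
    exact h0.congr (Filter.Eventually.of_forall fun a => (hpt q w a).symm)
  -- part 1
  have part1 : ∫ a, ((∑ i, (x i) ^ 2) + 2 * (x j) ^ 2 - (∑ i, a i * x i) ^ 2 * (a j) ^ 2)
      ∂(piG (m+1)) = 0 := by
    rw [integral_sub (integrable_const _) (hZint 2 2), integral_const, hIZ]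
    simp only [probReal_univ, smul_eq_mul, one_mul]
    rw [hS]
    ring
  -- part 3
  have part3 : ∫ a, ((∑ i, (x i) ^ 2) + 2 * (x j) ^ 2 - (∑ i, a i * x i) ^ 2 * (a j) ^ 2) ^ 2
      ∂(piG (m+1))
      = 8 * (∑ i, (x i) ^ 2) ^ 2 + 68 * (x j) ^ 2 * (∑ i, (x i) ^ 2) + 20 * (x j) ^ 4 := by
    have e : (fun a : Fin (m+1) → ℝ =>
        ((∑ i, (x i) ^ 2) + 2 * (x j) ^ 2 - (∑ i, a i * x i) ^ 2 * (a j) ^ 2) ^ 2)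
        = fun a : Fin (m+1) → ℝ =>
          (((∑ i, (x i) ^ 2) + 2 * (x j) ^ 2) ^ 2
            - (2 * ((∑ i, (x i) ^ 2) + 2 * (x j) ^ 2)) * ((∑ i, a i * x i) ^ 2 * (a j) ^ 2))
          + (∑ i, a i * x i) ^ 4 * (a j) ^ 4 := by
      funext a
      ring
    have hint1 : Integrable (fun a : Fin (m+1) → ℝ =>
        ((∑ i, (x i) ^ 2) + 2 * (x j) ^ 2) ^ 2
          - (2 * ((∑ i, (x i) ^ 2) + 2 * (x j) ^ 2)) * ((∑ i, a i * x i) ^ 2 * (a j) ^ 2))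
        (piG (m+1)) :=
      (integrable_const _).sub ((hZint 2 2).const_mul _)
    rw [e, integral_add hint1 (hZint 4 4),
      integral_sub (integrable_const _) ((hZint 2 2).const_mul _), integral_const,
      integral_const_mul, hIZ, hIZ4]
    simp only [probReal_univ, smul_eq_mul, one_mul]
    rw [hS]
    ring
  exact ⟨part1, part2, part3, part4⟩
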